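/- Fix κ_s ∈ (0, 1/8] and r ≥ 1. There exists L₀ ∈ ℕ, depending only on r and κ_s, such that for every odd integer L ≥ L₀, every g ∈ (0, 1], every N ∈ ℕ, and every sample point ω in the event Ω_g: there exist remainder fields (Ψ^{(N)}_{−n})_{0≤n≤N}, (R^{(N)}_{−n+1})_{1≤n≤N} satisfying the fixed-point recursion, they are unique, and every such family satisfies max_{0≤n≤N} L^{−κ_s n} max_{x∈Λ^n} |Ψ^{(N)}_{−n}(x)|^{1/3} ≤ (2g)^{−1}. -/

import Mathlib

open MeasureTheory ProbabilityTheory Filter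

namespace Hier

/-! ## The hierarchical lattice

A point of the unit lattice `Λ^N = (ℤ/L^Nℤ)^d` (for `L` odd) is encoded by its
balanced base-`L` digits: the coordinate `i` of the point is
`∑_{k<N} L^k · (x i k)`, where the digit `x i k ∈ ZMod L` is identified with its
representative in `{-(L-1)/2, …, (L-1)/2}`.  The level-`n` block `B_n(x)` is the
set of points sharing with `x` all digits of index `≥ n`, and the centre of a
level-`n` block is the point all of whose digits of index `< n` vanish. -/

variable (L d : ℕ)

/-- A point of the unit lattice `Λ^N`, in hierarchical digit coordinates. -/
abbrev Pt (N : ℕ) : Type := Fin d → Fin N → ZMod L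

/-- Transport along an equality of lattice sizes. -/
def reindex {M M' : ℕ} (h : M = M') (z : Pt L d M) : Pt L d M' :=
  fun i k => z i (Fin.cast h.symm k)

/-- Replace the `n` lowest digits of `x` by `a`; as `a` varies this enumerates
the level-`n` block `B_n(x)` of `x`. -/
def paste {N n : ℕ} (hn : n ≤ N) (x : Pt L d N) (a : Fin d → Fin n → ZMod L) :
    Pt L d N :=
  fun i k => if h : (k : ℕ) < n then a i ⟨k, h⟩ else x i k

/-- The centre of the level-`m` block of `Λ^N` indexed by `z ∈ Λ^{N-m}` (the
point `L^m z`). -/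
def embed {N m : ℕ} (hm : m ≤ N) (z : Pt L d (N - m)) : Pt L d N :=
  fun i k =>
    if h : m ≤ (k : ℕ) then z i ⟨(k : ℕ) - m, by have := k.isLt; omega⟩ else 0

variable [NeZero L]

/-- The averaging operator `Q_n g (x) = L^{-nd} ∑_{y ∈ B_n(x)} g(y)`. -/
noncomputable def Qop {N : ℕ} (n : ℕ) (hn : n ≤ N) (g : Pt L d N → ℝ) :
    Pt L d N → ℝ :=
  fun x => ((L : ℝ) ^ (n * d))⁻¹ * ∑ a : Fin d → Fin n → ZMod L, g (paste L d hn x a)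

/-- The fluctuation operator `P_n = Q_{n-1} - Q_n` (for `1 ≤ n ≤ N`). -/
noncomputable def Pop {N : ℕ} (n : ℕ) (hn : n ≤ N) (g : Pt L d N → ℝ) :
    Pt L d N → ℝ :=
  fun x => Qop L d (n - 1) (le_trans (Nat.sub_le n 1) hn) g x - Qop L d n hn g x

/-- The rescaling `S_m`, sending `f : Λ^N → ℝ` to `S_m f : Λ^{N-m} → ℝ`,
`(S_m f)(z) = f(L^m z)`.  In particular `scale … (Qop …)` is the coarse
graining `S_m Q_m`. -/
noncomputable def scale {N m : ℕ} (hm : m ≤ N) (f : Pt L d N → ℝ) :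
    Pt L d (N - m) → ℝ :=
  fun z => f (embed L d hm z)

/-- The hierarchical Green operator `G_N = ∑_{k=1}^N L^{2(k-1)} P_k`. -/
noncomputable def green (N : ℕ) (g : Pt L d N → ℝ) : Pt L d N → ℝ :=
  fun x => ∑ k : Fin N, (L : ℝ) ^ (2 * (k : ℕ)) * Pop L d ((k : ℕ) + 1) k.isLt g x

/-- The (negative of the) hierarchical Laplacian
`(-Δ_{H,N}) = ∑_{n=1}^N L^{-2(n-1)} P_n`. -/
noncomputable def lap (N : ℕ) (g : Pt L d N → ℝ) : Pt L d N → ℝ :=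
  fun x => ∑ k : Fin N, ((L : ℝ) ^ (2 * (k : ℕ)))⁻¹ * Pop L d ((k : ℕ) + 1) k.isLt g x

/-- The fluctuation propagator `Γ_m = ∑_{k=1}^m L^{2(k-1)} P_k` acting on
functions on `Λ^N` (`m ≤ N`). -/
noncomputable def gammaProp {N : ℕ} (m : ℕ) (hm : m ≤ N) (g : Pt L d N → ℝ) :
    Pt L d N → ℝ :=
  fun x => ∑ k : Fin m, (L : ℝ) ^ (2 * (k : ℕ)) *
    Pop L d ((k : ℕ) + 1) (le_trans k.isLt hm) g x

/-- `x` and `y` lie in the same level-`m` block of `Λ^N`. -/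
def sameBlock {N : ℕ} (m : ℕ) (x y : Pt L d N) : Prop :=
  ∀ (i : Fin d) (k : Fin N), m ≤ (k : ℕ) → x i k = y i k


variable {Ω : Type*} [MeasurableSpace Ω]

/-- A **consistent hierarchical white noise**: a family `(ξ_{-n})_{n ∈ ℕ}` of
random functions `Λ^n → ℝ` such that for every `n` the variables
`(ξ_{-n}(x))_{x ∈ Λ^n}` are independent standard Gaussians and, for every `n`,
`ξ_{-n} = L^{2-α} · S₁Q₁ ξ_{-(n+1)}` almost surely, where `α := 2 - d/2`. -/
structure WhiteNoise (P : Measure Ω) where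
  ξ : (n : ℕ) → Pt L d n → Ω → ℝ
  meas : ∀ n x, Measurable (ξ n x)
  gauss : ∀ n x, P.map (ξ n x) = gaussianReal 0 1
  indep : ∀ n, iIndepFun (ξ n) P
  consistent : ∀ n : ℕ, ∀ᵐ ω ∂P, ∀ z : Pt L d n,
    ξ n z ω = (L : ℝ) ^ ((2 : ℝ) - ((2 : ℝ) - (d : ℝ) / 2)) *
      scale L d (Nat.le_add_left 1 n)
        (Qop L d 1 (Nat.le_add_left 1 n) (fun y => ξ (n + 1) y ω))
        (reindex L d (by omega) z)

/-- The Wick product `(f ⋄ P₁f)(x) = f(x)·(P₁f)(x) − (1 − L^{-d})` of a field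
of independent standard Gaussians with its `P₁`-fluctuation. -/
noncomputable def wickP1 {N : ℕ} (hN : 1 ≤ N) (f : Pt L d N → ℝ) :
    Pt L d N → ℝ :=
  fun x => f x * Pop L d 1 hN f x - (1 - ((L : ℝ) ^ d)⁻¹)

/-- The second-chaos field
`db^{(N)}_{-n} = ∑_{k=1}^{N-n} L^{(2-2α)k} S_k Q_k (ξ_{-n-k} ⋄ P₁ ξ_{-n-k})`,
with `α := 2 - d/2`. -/
noncomputable def db {P : Measure Ω} (W : WhiteNoise L d P) (N n : ℕ) (ω : Ω) :
    Pt L d n → ℝ :=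
  fun z => ∑ k : Fin (N - n),
    (L : ℝ) ^ (((2 : ℝ) - 2 * ((2 : ℝ) - (d : ℝ) / 2)) * (((k : ℕ) : ℝ) + 1)) *
      scale L d (Nat.le_add_left ((k : ℕ) + 1) n)
        (Qop L d ((k : ℕ) + 1) (Nat.le_add_left ((k : ℕ) + 1) n)
          (wickP1 L d (by omega) (fun y => W.ξ (n + ((k : ℕ) + 1)) y ω)))
        (reindex L d (by omega) z)

/-- `L^{-κ_s n} · max( max_{x ∈ Λ^n} |ξ_{-n}(x)| , max_{x ∈ Λ^n} |db^{(N)}_{-n}(x)|^{1/2} )`. -/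
noncomputable def normBlock {P : Measure Ω} (W : WhiteNoise L d P) (κs : ℝ)
    (N n : ℕ) (ω : Ω) : ℝ :=
  (L : ℝ) ^ (-(κs * (n : ℝ))) *
    max (⨆ x : Pt L d n, |W.ξ n x ω|)
      (⨆ x : Pt L d n, |db L d W N n ω x| ^ ((1 : ℝ) / 2))

/-- The norm `⦀ξ, db⦀ = sup_{N ∈ ℕ} max_{0 ≤ n ≤ N} normBlock(N, n)`,
valued in `ℝ≥0∞`. -/
noncomputable def enorm {P : Measure Ω} (W : WhiteNoise L d P) (κs : ℝ)
    (ω : Ω) : ENNReal :=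
  ⨆ (N : ℕ) (n : Fin (N + 1)), ENNReal.ofReal (normBlock L d W κs N n ω)

/-- The good event `Ω_g = { ⦀ξ, db⦀ ≤ (2g)⁻¹ }`. -/
def goodEvent {P : Measure Ω} (W : WhiteNoise L d P) (κs g : ℝ) : Set Ω :=
  {ω | enorm L d W κs ω ≤ ENNReal.ofReal (2 * g)⁻¹}


/-! ### The d = 2 renormalisation-group data -/

/-- The effective coupling constant `λ_{-n} = L^{-n} g` (d = 2, α = 1). -/
noncomputable def lamC (g : ℝ) (n : ℕ) : ℝ := ((L : ℝ) ^ n)⁻¹ * g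

/-- The effective mass `μ_{-n} = L^{-2n} (r − (1 − L^{-2}) n g²)` (d = 2). -/
noncomputable def muC (r g : ℝ) (n : ℕ) : ℝ :=
  ((L : ℝ) ^ (2 * n))⁻¹ * (r - (1 - ((L : ℝ) ^ 2)⁻¹) * (n : ℝ) * g ^ 2)

/-- The level-`N` bare equation (d = 2):
`(-Δ_{H,N}) v = (λ_{-N} ξ_{-N} + μ_{-N}) v + γ_{-N}` pointwise on `Λ^N`,
with `γ_{-N} = L^{-N}`. -/
def IsBareSolution {P : Measure Ω} (W : WhiteNoise L 2 P) (ω : Ω) (g r : ℝ)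
    (N : ℕ) (v : Pt L 2 N → ℝ) : Prop :=
  ∀ x, lap L 2 N v x =
    (lamC L g N * W.ξ N x ω + muC L r g N) * v x + ((L : ℝ) ^ N)⁻¹

/-- The coarse graining `v^{(N)}_{-n} = L^{-(N-n)} S_{N-n} Q_{N-n} v : Λ^n → ℝ`
(d = 2, α = 1). -/
noncomputable def coarse (N n : ℕ) (hn : n ≤ N) (v : Pt L 2 N → ℝ) :
    Pt L 2 n → ℝ :=
  fun z => ((L : ℝ) ^ (N - n))⁻¹ *
    scale L 2 (Nat.sub_le N n) (Qop L 2 (N - n) (Nat.sub_le N n) v)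
      (reindex L 2 (by omega) z)

/-- The fixed-point recursion (d = 2, α = 1, so `L^{2-3α} = L^{-1}`) for the
remainder fields `Ψ^{(N)}_{-n} : Λ^n → ℝ` (`0 ≤ n ≤ N`) and
`R^{(N)}_{-n+1} : Λ^n → ℝ` (`1 ≤ n ≤ N`): `Ψ^{(N)}_{-N} = 0` together with the
implicit equation for `R^{(N)}_{-n+1}` and the update for `Ψ^{(N)}_{-n+1}`. -/
def IsRemainder {P : Measure Ω} (W : WhiteNoise L 2 P) (ω : Ω) (g r : ℝ)
    (N : ℕ) (Ψ : ∀ n : ℕ, Pt L 2 n → ℝ) (R : ∀ n : ℕ, Pt L 2 n → ℝ) : Prop :=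
  Ψ N = 0 ∧
  ∀ (n : ℕ) (hn1 : 1 ≤ n), n ≤ N →
    (R n = fun x =>
        Pop L 2 1 hn1 (db L 2 W N n ω) x
        + Pop L 2 1 hn1
            (fun y => W.ξ n y ω * Pop L 2 1 hn1 (fun y' => W.ξ n y' ω) y) x
        + lamC L g n * Pop L 2 1 hn1 (Ψ n) x
        + lamC L g n * Pop L 2 1 hn1 (fun y => W.ξ n y ω * R n y) x
        + lamC L g n * Pop L 2 1 hn1
            (fun y => db L 2 W N n ω y * Pop L 2 1 hn1 (fun y' => W.ξ n y' ω) y) x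
        + lamC L g n ^ 2 * Pop L 2 1 hn1 (fun y => db L 2 W N n ω y * R n y) x
        + lamC L g n ^ 2 * Pop L 2 1 hn1
            (fun y => Ψ n y * Pop L 2 1 hn1 (fun y' => W.ξ n y' ω) y) x
        + lamC L g n ^ 3 * Pop L 2 1 hn1 (fun y => Ψ n y * R n y) x
        + muC L r g n * (lamC L g n)⁻¹ * Pop L 2 1 hn1 (fun y => W.ξ n y ω) x
        + muC L r g n * R n x) ∧
    (Ψ (n - 1) = fun z =>
        ((L : ℝ))⁻¹ *
          (scale L 2 hn1 (Qop L 2 1 hn1 (Ψ n)) z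
          + scale L 2 hn1 (Qop L 2 1 hn1 (fun y => W.ξ n y ω * R n y)) z
          + scale L 2 hn1 (Qop L 2 1 hn1
              (fun y => db L 2 W N n ω y * Pop L 2 1 hn1 (fun y' => W.ξ n y' ω) y)) z
          + lamC L g n * scale L 2 hn1 (Qop L 2 1 hn1
              (fun y => db L 2 W N n ω y * R n y)) z
          + lamC L g n * scale L 2 hn1 (Qop L 2 1 hn1
              (fun y => Ψ n y * Pop L 2 1 hn1 (fun y' => W.ξ n y' ω) y)) z
          + lamC L g n ^ 2 * scale L 2 hn1 (Qop L 2 1 hn1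
              (fun y => Ψ n y * R n y)) z))

/-- The unique point of the one-point lattice `Λ^0`. -/
def pt0 : Pt L 2 0 := fun _ i => Fin.elim0 i


/-! ### Auxiliary lemmas for Statement 15 -/

variable {L : ℕ} [NeZero L]

lemma qop_sub {N n : ℕ} (hn : n ≤ N) (u v : Pt L 2 N → ℝ) (x : Pt L 2 N) :
    Qop L 2 n hn (fun y => u y - v y) x = Qop L 2 n hn u x - Qop L 2 n hn v x := by
  simp [Qop, Finset.sum_sub_distrib, mul_sub]

lemma qop_abs_le {N n : ℕ} (hL : 0 < L) (hn : n ≤ N) {f : Pt L 2 N → ℝ} {C : ℝ}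
    (hf : ∀ y, |f y| ≤ C) (x : Pt L 2 N) : |Qop L 2 n hn f x| ≤ C := by
  have hcard : (Fintype.card (Fin 2 → Fin n → ZMod L) : ℝ) = (L : ℝ) ^ (n * 2) := by
    simp [Fintype.card_fun, ZMod.card]
    push_cast
    ring
  have hLpos : (0 : ℝ) < (L : ℝ) ^ (n * 2) := by positivity
  have h1 : |∑ a : Fin 2 → Fin n → ZMod L, f (paste L 2 hn x a)| ≤ (L : ℝ) ^ (n * 2) * C := by
    calc |∑ a : Fin 2 → Fin n → ZMod L, f (paste L 2 hn x a)|
        ≤ ∑ a : Fin 2 → Fin n → ZMod L, |f (paste L 2 hn x a)| :=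
          Finset.abs_sum_le_sum_abs _ _
      _ ≤ ∑ _a : Fin 2 → Fin n → ZMod L, C := Finset.sum_le_sum (fun a _ => hf _)
      _ = (Fintype.card (Fin 2 → Fin n → ZMod L) : ℝ) * C := by
          rw [Finset.sum_const, Finset.card_univ, nsmul_eq_mul]
      _ = (L : ℝ) ^ (n * 2) * C := by rw [hcard]
  show |((L : ℝ) ^ (n * 2))⁻¹ * _| ≤ C
  rw [abs_mul, abs_of_nonneg (inv_nonneg.mpr hLpos.le)]
  calc ((L : ℝ) ^ (n * 2))⁻¹ * |∑ a : Fin 2 → Fin n → ZMod L, f (paste L 2 hn x a)|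
      ≤ ((L : ℝ) ^ (n * 2))⁻¹ * ((L : ℝ) ^ (n * 2) * C) := by
        exact mul_le_mul_of_nonneg_left h1 (inv_nonneg.mpr hLpos.le)
    _ = C := by field_simp

lemma pop1_sub {N : ℕ} (hn : 1 ≤ N) (u v : Pt L 2 N → ℝ) (x : Pt L 2 N) :
    Pop L 2 1 hn (fun y => u y - v y) x = Pop L 2 1 hn u x - Pop L 2 1 hn v x := by
  simp only [Pop, qop_sub]; ring

lemma pop1_abs_le {N : ℕ} (hL : 0 < L) (hn : 1 ≤ N) {f : Pt L 2 N → ℝ} {C : ℝ}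
    (hf : ∀ y, |f y| ≤ C) (x : Pt L 2 N) : |Pop L 2 1 hn f x| ≤ 2 * C := by
  have h0 := qop_abs_le hL (le_trans (Nat.sub_le 1 1) hn) hf x
  have h1 := qop_abs_le hL hn hf x
  calc |Pop L 2 1 hn f x| ≤ |Qop L 2 (1-1) (le_trans (Nat.sub_le 1 1) hn) f x| +
        |Qop L 2 1 hn f x| := abs_sub _ _
    _ ≤ 2 * C := by linarith

lemma scaleq_abs_le {N : ℕ} (hL : 0 < L) (hn : 1 ≤ N) {f : Pt L 2 N → ℝ} {C : ℝ}
    (hf : ∀ y, |f y| ≤ C) (z : Pt L 2 (N - 1)) :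
    |scale L 2 hn (Qop L 2 1 hn f) z| ≤ C := qop_abs_le hL hn hf _

/-- The affine map whose fixed point is `R^{(N)}_{-n+1}`. -/
noncomputable def Phimap (n : ℕ) (hn1 : 1 ≤ n) (ξn dbn Ψn : Pt L 2 n → ℝ)
    (lam mu : ℝ) (R : Pt L 2 n → ℝ) : Pt L 2 n → ℝ := fun x =>
  Pop L 2 1 hn1 dbn x
  + Pop L 2 1 hn1 (fun y => ξn y * Pop L 2 1 hn1 (fun y' => ξn y') y) x
  + lam * Pop L 2 1 hn1 Ψn x
  + lam * Pop L 2 1 hn1 (fun y => ξn y * R y) x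
  + lam * Pop L 2 1 hn1 (fun y => dbn y * Pop L 2 1 hn1 (fun y' => ξn y') y) x
  + lam ^ 2 * Pop L 2 1 hn1 (fun y => dbn y * R y) x
  + lam ^ 2 * Pop L 2 1 hn1 (fun y => Ψn y * Pop L 2 1 hn1 (fun y' => ξn y') y) x
  + lam ^ 3 * Pop L 2 1 hn1 (fun y => Ψn y * R y) x
  + mu * lam⁻¹ * Pop L 2 1 hn1 (fun y => ξn y) x
  + mu * R x

/-- The update producing `Ψ^{(N)}_{-n+1}` from `Ψ^{(N)}_{-n}` and `R^{(N)}_{-n+1}`. -/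
noncomputable def Psinext (n : ℕ) (hn1 : 1 ≤ n) (ξn dbn Ψn : Pt L 2 n → ℝ)
    (lam : ℝ) (R : Pt L 2 n → ℝ) : Pt L 2 (n - 1) → ℝ := fun z =>
  ((L : ℝ))⁻¹ *
    (scale L 2 hn1 (Qop L 2 1 hn1 Ψn) z
    + scale L 2 hn1 (Qop L 2 1 hn1 (fun y => ξn y * R y)) z
    + scale L 2 hn1 (Qop L 2 1 hn1
        (fun y => dbn y * Pop L 2 1 hn1 (fun y' => ξn y') y)) z
    + lam * scale L 2 hn1 (Qop L 2 1 hn1 (fun y => dbn y * R y)) z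
    + lam * scale L 2 hn1 (Qop L 2 1 hn1
        (fun y => Ψn y * Pop L 2 1 hn1 (fun y' => ξn y') y)) z
    + lam ^ 2 * scale L 2 hn1 (Qop L 2 1 hn1 (fun y => Ψn y * R y)) z)

/-- `IsRemainder` restated through `Phimap` and `Psinext`. -/
lemma isRemainder_iff {Ω : Type*} [MeasurableSpace Ω] {P : Measure Ω}
    (W : WhiteNoise L 2 P) (ω : Ω) (g r : ℝ) (N : ℕ)
    (Ψ R : ∀ n : ℕ, Pt L 2 n → ℝ) :
    IsRemainder L W ω g r N Ψ R ↔
      (Ψ N = 0 ∧ ∀ (n : ℕ) (hn1 : 1 ≤ n), n ≤ N →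
        (R n = Phimap n hn1 (fun y => W.ξ n y ω) (db L 2 W N n ω) (Ψ n)
            (lamC L g n) (muC L r g n) (R n)) ∧
        (Ψ (n - 1) = Psinext n hn1 (fun y => W.ξ n y ω) (db L 2 W N n ω) (Ψ n)
            (lamC L g n) (R n))) :=
  Iff.rfl

section Level

variable {n : ℕ} (hn1 : 1 ≤ n) {ξn dbn Ψn : Pt L 2 n → ℝ}
  {lam mu B : ℝ}

/-- Pointwise bound on the affine map. -/
lemma phimap_abs_le (hL : 0 < L) (hB : 0 < B) (hlam : 0 ≤ lam)
    (hξ : ∀ x, |ξn x| ≤ B) (hdb : ∀ x, |dbn x| ≤ B ^ 2)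
    (hΨ : ∀ x, |Ψn x| ≤ B ^ 3) (ha : lam * B ≤ 1 / 20)
    (hmu : |mu| ≤ 1 / 10) (hml : |mu * lam⁻¹| ≤ B / 2)
    {R : Pt L 2 n → ℝ} {D : ℝ} (hD : 0 ≤ D) (hR : ∀ y, |R y| ≤ D)
    (x : Pt L 2 n) :
    |Phimap n hn1 ξn dbn Ψn lam mu R x| ≤ 8 * B ^ 2 + D / 2 := by
  have hPξ : ∀ y, |Pop L 2 1 hn1 (fun y' => ξn y') y| ≤ 2 * B :=
    pop1_abs_le hL hn1 hξ
  have m1 : ∀ y : Pt L 2 n, |ξn y * Pop L 2 1 hn1 (fun y' => ξn y') y| ≤ B * (2 * B) :=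
    fun y => by rw [abs_mul]; exact mul_le_mul (hξ y) (hPξ y) (abs_nonneg _) hB.le
  have m2 : ∀ y : Pt L 2 n, |ξn y * R y| ≤ B * D :=
    fun y => by rw [abs_mul]; exact mul_le_mul (hξ y) (hR y) (abs_nonneg _) hB.le
  have m3 : ∀ y : Pt L 2 n, |dbn y * Pop L 2 1 hn1 (fun y' => ξn y') y| ≤ B ^ 2 * (2 * B) :=
    fun y => by rw [abs_mul]; exact mul_le_mul (hdb y) (hPξ y) (abs_nonneg _) (by positivity)
  have m4 : ∀ y : Pt L 2 n, |dbn y * R y| ≤ B ^ 2 * D :=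
    fun y => by rw [abs_mul]; exact mul_le_mul (hdb y) (hR y) (abs_nonneg _) (by positivity)
  have m5 : ∀ y : Pt L 2 n, |Ψn y * Pop L 2 1 hn1 (fun y' => ξn y') y| ≤ B ^ 3 * (2 * B) :=
    fun y => by rw [abs_mul]; exact mul_le_mul (hΨ y) (hPξ y) (abs_nonneg _) (by positivity)
  have m6 : ∀ y : Pt L 2 n, |Ψn y * R y| ≤ B ^ 3 * D :=
    fun y => by rw [abs_mul]; exact mul_le_mul (hΨ y) (hR y) (abs_nonneg _) (by positivity)
  have S1 : |Pop L 2 1 hn1 dbn x| ≤ 2 * B ^ 2 := pop1_abs_le hL hn1 hdb x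
  have S2 : |Pop L 2 1 hn1 (fun y => ξn y * Pop L 2 1 hn1 (fun y' => ξn y') y) x|
      ≤ 2 * (B * (2 * B)) := pop1_abs_le hL hn1 m1 x
  have S3 : |lam * Pop L 2 1 hn1 Ψn x| ≤ lam * (2 * B ^ 3) := by
    rw [abs_mul, abs_of_nonneg hlam]
    exact mul_le_mul_of_nonneg_left (pop1_abs_le hL hn1 hΨ x) hlam
  have S4 : |lam * Pop L 2 1 hn1 (fun y => ξn y * R y) x| ≤ lam * (2 * (B * D)) := by
    rw [abs_mul, abs_of_nonneg hlam]
    exact mul_le_mul_of_nonneg_left (pop1_abs_le hL hn1 m2 x) hlam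
  have S5 : |lam * Pop L 2 1 hn1 (fun y => dbn y * Pop L 2 1 hn1 (fun y' => ξn y') y) x|
      ≤ lam * (2 * (B ^ 2 * (2 * B))) := by
    rw [abs_mul, abs_of_nonneg hlam]
    exact mul_le_mul_of_nonneg_left (pop1_abs_le hL hn1 m3 x) hlam
  have hlam2 : (0:ℝ) ≤ lam ^ 2 := by positivity
  have hlam3 : (0:ℝ) ≤ lam ^ 3 := by positivity
  have S6 : |lam ^ 2 * Pop L 2 1 hn1 (fun y => dbn y * R y) x|
      ≤ lam ^ 2 * (2 * (B ^ 2 * D)) := by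
    rw [abs_mul, abs_of_nonneg hlam2]
    exact mul_le_mul_of_nonneg_left (pop1_abs_le hL hn1 m4 x) hlam2
  have S7 : |lam ^ 2 * Pop L 2 1 hn1 (fun y => Ψn y * Pop L 2 1 hn1 (fun y' => ξn y') y) x|
      ≤ lam ^ 2 * (2 * (B ^ 3 * (2 * B))) := by
    rw [abs_mul, abs_of_nonneg hlam2]
    exact mul_le_mul_of_nonneg_left (pop1_abs_le hL hn1 m5 x) hlam2
  have S8 : |lam ^ 3 * Pop L 2 1 hn1 (fun y => Ψn y * R y) x|
      ≤ lam ^ 3 * (2 * (B ^ 3 * D)) := by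
    rw [abs_mul, abs_of_nonneg hlam3]
    exact mul_le_mul_of_nonneg_left (pop1_abs_le hL hn1 m6 x) hlam3
  have S9 : |mu * lam⁻¹ * Pop L 2 1 hn1 (fun y => ξn y) x| ≤ B / 2 * (2 * B) := by
    rw [abs_mul]
    exact mul_le_mul hml (pop1_abs_le hL hn1 hξ x) (abs_nonneg _) (by linarith)
  have S10 : |mu * R x| ≤ 1 / 10 * D := by
    rw [abs_mul]; exact mul_le_mul hmu (hR x) (abs_nonneg _) (by norm_num)
  have hu0 : (0:ℝ) ≤ lam * B := by positivity
  have hu2 : lam * B * (lam * B) ≤ 1 / 20 * (lam * B) :=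
    mul_le_mul_of_nonneg_right ha hu0
  have hu2' : (0:ℝ) ≤ lam * B * (lam * B) := by positivity
  have hu3 : lam * B * (lam * B) * (lam * B) ≤ 1 / 20 * (lam * B) * (lam * B) :=
    mul_le_mul_of_nonneg_right hu2 hu0
  have e1 : lam * (2 * B ^ 3) + lam * (2 * (B ^ 2 * (2 * B)))
      + lam ^ 2 * (2 * (B ^ 3 * (2 * B))) ≤ B ^ 2 := by
    have h : 6 * (lam * B) + 4 * (lam * B) * (lam * B) ≤ 1 := by linarith
    have := mul_le_mul_of_nonneg_right h (sq_nonneg B)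
    linarith [this]
  have e2 : lam * (2 * (B * D)) + lam ^ 2 * (2 * (B ^ 2 * D))
      + lam ^ 3 * (2 * (B ^ 3 * D)) ≤ 2 / 5 * D := by
    have h : 2 * (lam * B) + 2 * (lam * B) * (lam * B)
        + 2 * (lam * B) * (lam * B) * (lam * B) ≤ 2 / 5 := by linarith
    have := mul_le_mul_of_nonneg_right h hD
    linarith [this]
  rw [abs_le] at S1 S2 S3 S4 S5 S6 S7 S8 S9 S10 ⊢
  constructor <;>
    · simp only [Phimap]
      linarith [S1.1, S1.2, S2.1, S2.2, S3.1, S3.2, S4.1, S4.2, S5.1, S5.2,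
        S6.1, S6.2, S7.1, S7.2, S8.1, S8.2, S9.1, S9.2, S10.1, S10.2, e1, e2]

/-- Contraction estimate for the affine map. -/
lemma phimap_contract (hL : 0 < L) (hB : 0 < B) (hlam : 0 ≤ lam)
    (hξ : ∀ x, |ξn x| ≤ B) (hdb : ∀ x, |dbn x| ≤ B ^ 2)
    (hΨ : ∀ x, |Ψn x| ≤ B ^ 3) (ha : lam * B ≤ 1 / 20) (hmu : |mu| ≤ 1 / 10)
    {R R' : Pt L 2 n → ℝ} {D : ℝ} (hD : 0 ≤ D) (hRR' : ∀ y, |R y - R' y| ≤ D)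
    (x : Pt L 2 n) :
    |Phimap n hn1 ξn dbn Ψn lam mu R x - Phimap n hn1 ξn dbn Ψn lam mu R' x|
      ≤ D / 2 := by
  have k1 : Pop L 2 1 hn1 (fun y => ξn y * R y) x
      - Pop L 2 1 hn1 (fun y => ξn y * R' y) x
      = Pop L 2 1 hn1 (fun y => ξn y * (R y - R' y)) x := by
    rw [← pop1_sub]
    have hfg : (fun y => ξn y * R y - ξn y * R' y)
        = fun y : Pt L 2 n => ξn y * (R y - R' y) := funext fun y => by ring
    rw [hfg]
  have k2 : Pop L 2 1 hn1 (fun y => dbn y * R y) x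
      - Pop L 2 1 hn1 (fun y => dbn y * R' y) x
      = Pop L 2 1 hn1 (fun y => dbn y * (R y - R' y)) x := by
    rw [← pop1_sub]
    have hfg : (fun y => dbn y * R y - dbn y * R' y)
        = fun y : Pt L 2 n => dbn y * (R y - R' y) := funext fun y => by ring
    rw [hfg]
  have k3 : Pop L 2 1 hn1 (fun y => Ψn y * R y) x
      - Pop L 2 1 hn1 (fun y => Ψn y * R' y) x
      = Pop L 2 1 hn1 (fun y => Ψn y * (R y - R' y)) x := by
    rw [← pop1_sub]
    have hfg : (fun y => Ψn y * R y - Ψn y * R' y)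
        = fun y : Pt L 2 n => Ψn y * (R y - R' y) := funext fun y => by ring
    rw [hfg]
  have key : Phimap n hn1 ξn dbn Ψn lam mu R x - Phimap n hn1 ξn dbn Ψn lam mu R' x
      = lam * Pop L 2 1 hn1 (fun y => ξn y * (R y - R' y)) x
      + lam ^ 2 * Pop L 2 1 hn1 (fun y => dbn y * (R y - R' y)) x
      + lam ^ 3 * Pop L 2 1 hn1 (fun y => Ψn y * (R y - R' y)) x
      + mu * (R x - R' x) := by
    simp only [Phimap]; rw [← k1, ← k2, ← k3]; ring
  have m2 : ∀ y : Pt L 2 n, |ξn y * (R y - R' y)| ≤ B * D :=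
    fun y => by rw [abs_mul]; exact mul_le_mul (hξ y) (hRR' y) (abs_nonneg _) hB.le
  have m4 : ∀ y : Pt L 2 n, |dbn y * (R y - R' y)| ≤ B ^ 2 * D :=
    fun y => by rw [abs_mul]; exact mul_le_mul (hdb y) (hRR' y) (abs_nonneg _) (by positivity)
  have m6 : ∀ y : Pt L 2 n, |Ψn y * (R y - R' y)| ≤ B ^ 3 * D :=
    fun y => by rw [abs_mul]; exact mul_le_mul (hΨ y) (hRR' y) (abs_nonneg _) (by positivity)
  have hlam2 : (0:ℝ) ≤ lam ^ 2 := by positivity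
  have hlam3 : (0:ℝ) ≤ lam ^ 3 := by positivity
  have S4 : |lam * Pop L 2 1 hn1 (fun y => ξn y * (R y - R' y)) x|
      ≤ lam * (2 * (B * D)) := by
    rw [abs_mul, abs_of_nonneg hlam]
    exact mul_le_mul_of_nonneg_left (pop1_abs_le hL hn1 m2 x) hlam
  have S6 : |lam ^ 2 * Pop L 2 1 hn1 (fun y => dbn y * (R y - R' y)) x|
      ≤ lam ^ 2 * (2 * (B ^ 2 * D)) := by
    rw [abs_mul, abs_of_nonneg hlam2]
    exact mul_le_mul_of_nonneg_left (pop1_abs_le hL hn1 m4 x) hlam2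
  have S8 : |lam ^ 3 * Pop L 2 1 hn1 (fun y => Ψn y * (R y - R' y)) x|
      ≤ lam ^ 3 * (2 * (B ^ 3 * D)) := by
    rw [abs_mul, abs_of_nonneg hlam3]
    exact mul_le_mul_of_nonneg_left (pop1_abs_le hL hn1 m6 x) hlam3
  have S10 : |mu * (R x - R' x)| ≤ 1 / 10 * D := by
    rw [abs_mul]; exact mul_le_mul hmu (hRR' x) (abs_nonneg _) (by norm_num)
  have hu0 : (0:ℝ) ≤ lam * B := by positivity
  have hu2 : lam * B * (lam * B) ≤ 1 / 20 * (lam * B) :=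
    mul_le_mul_of_nonneg_right ha hu0
  have hu3 : lam * B * (lam * B) * (lam * B) ≤ 1 / 20 * (lam * B) * (lam * B) :=
    mul_le_mul_of_nonneg_right hu2 hu0
  have e2 : lam * (2 * (B * D)) + lam ^ 2 * (2 * (B ^ 2 * D))
      + lam ^ 3 * (2 * (B ^ 3 * D)) ≤ 2 / 5 * D := by
    have h : 2 * (lam * B) + 2 * (lam * B) * (lam * B)
        + 2 * (lam * B) * (lam * B) * (lam * B) ≤ 2 / 5 := by linarith
    have := mul_le_mul_of_nonneg_right h hD
    linarith [this]
  rw [key, abs_le]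
  rw [abs_le] at S4 S6 S8 S10
  constructor <;> linarith [S4.1, S4.2, S6.1, S6.2, S8.1, S8.2, S10.1, S10.2, e2]

/-- Any fixed point of the affine map is unique. -/
lemma phimap_fixed_unique (hL : 0 < L) (hB : 0 < B) (hlam : 0 ≤ lam)
    (hξ : ∀ x, |ξn x| ≤ B) (hdb : ∀ x, |dbn x| ≤ B ^ 2)
    (hΨ : ∀ x, |Ψn x| ≤ B ^ 3) (ha : lam * B ≤ 1 / 20) (hmu : |mu| ≤ 1 / 10)
    {R R' : Pt L 2 n → ℝ} (hfix : R = Phimap n hn1 ξn dbn Ψn lam mu R)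
    (hfix' : R' = Phimap n hn1 ξn dbn Ψn lam mu R') : R = R' := by
  set D := ‖R - R'‖ with hDdef
  have hD0 : 0 ≤ D := norm_nonneg _
  have hpt : ∀ y, |R y - R' y| ≤ D := fun y => by
    simpa [Real.norm_eq_abs] using norm_le_pi_norm (R - R') y
  have hhalf : ∀ x, |R x - R' x| ≤ D / 2 := fun x => by
    have h1 : R x = Phimap n hn1 ξn dbn Ψn lam mu R x := congrFun hfix x
    have h2 : R' x = Phimap n hn1 ξn dbn Ψn lam mu R' x := congrFun hfix' x
    rw [h1, h2]
    exact phimap_contract hn1 hL hB hlam hξ hdb hΨ ha hmu hD0 hpt x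
  have hnorm : D ≤ D / 2 := by
    rw [hDdef]
    refine (pi_norm_le_iff_of_nonneg (by linarith)).2 fun y => ?_
    simpa [Real.norm_eq_abs] using hhalf y
  have : D ≤ 0 := by linarith
  have hz : R - R' = 0 := by
    rwa [← norm_le_zero_iff]
  funext x
  have := congrFun hz x
  simpa [sub_eq_zero] using this

/-- Any fixed point of the affine map is bounded by `16 B²`. -/
lemma phimap_fixed_bound (hL : 0 < L) (hB : 0 < B) (hlam : 0 ≤ lam)
    (hξ : ∀ x, |ξn x| ≤ B) (hdb : ∀ x, |dbn x| ≤ B ^ 2)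
    (hΨ : ∀ x, |Ψn x| ≤ B ^ 3) (ha : lam * B ≤ 1 / 20)
    (hmu : |mu| ≤ 1 / 10) (hml : |mu * lam⁻¹| ≤ B / 2)
    {R : Pt L 2 n → ℝ} (hfix : R = Phimap n hn1 ξn dbn Ψn lam mu R) :
    ∀ x, |R x| ≤ 16 * B ^ 2 := by
  set D := ‖R‖ with hDdef
  have hD0 : 0 ≤ D := norm_nonneg _
  have hpt : ∀ y, |R y| ≤ D := fun y => by
    simpa [Real.norm_eq_abs] using norm_le_pi_norm R y
  have hstep : ∀ x, |R x| ≤ 8 * B ^ 2 + D / 2 := fun x => by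
    rw [congrFun hfix x]
    exact phimap_abs_le hn1 hL hB hlam hξ hdb hΨ ha hmu hml hD0 hpt x
  have hnorm : D ≤ 8 * B ^ 2 + D / 2 := by
    rw [hDdef]
    refine (pi_norm_le_iff_of_nonneg (by positivity)).2 fun y => ?_
    simpa [Real.norm_eq_abs] using hstep y
  intro x
  calc |R x| ≤ D := hpt x
    _ ≤ 16 * B ^ 2 := by linarith

/-- Existence of a fixed point of the affine map. -/
lemma phimap_fixed_exists (hL : 0 < L) (hB : 0 < B) (hlam : 0 ≤ lam)
    (hξ : ∀ x, |ξn x| ≤ B) (hdb : ∀ x, |dbn x| ≤ B ^ 2)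
    (hΨ : ∀ x, |Ψn x| ≤ B ^ 3) (ha : lam * B ≤ 1 / 20) (hmu : |mu| ≤ 1 / 10) :
    ∃ R : Pt L 2 n → ℝ, R = Phimap n hn1 ξn dbn Ψn lam mu R := by
  have hcontr : ContractingWith (1/2 : NNReal) (Phimap n hn1 ξn dbn Ψn lam mu) := by
    constructor
    · rw [← NNReal.coe_lt_coe]; norm_num
    · refine LipschitzWith.of_dist_le_mul fun f g => ?_
      have hDg : (0:ℝ) ≤ dist f g := dist_nonneg
      have hpt : ∀ y, |f y - g y| ≤ dist f g := fun y => by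
        rw [← Real.dist_eq]; exact dist_le_pi_dist f g y
      have hle : ((1/2 : NNReal) : ℝ) * dist f g = dist f g / 2 := by
        push_cast; ring
      rw [hle]
      refine (dist_pi_le_iff (by positivity)).2 fun x => ?_
      rw [Real.dist_eq]
      exact phimap_contract hn1 hL hB hlam hξ hdb hΨ ha hmu hDg hpt x
  exact ⟨hcontr.fixedPoint (Phimap n hn1 ξn dbn Ψn lam mu),
    (hcontr.fixedPoint_isFixedPt).symm⟩

/-- Bound on the updated `Ψ`. -/
lemma psinext_abs_le (hL : 0 < L) (hB : 0 < B) (hlam : 0 ≤ lam)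
    (hξ : ∀ x, |ξn x| ≤ B) (hdb : ∀ x, |dbn x| ≤ B ^ 2)
    (hΨ : ∀ x, |Ψn x| ≤ B ^ 3) (ha : lam * B ≤ 1 / 20)
    {R : Pt L 2 n → ℝ} (hR : ∀ y, |R y| ≤ 16 * B ^ 2)
    (z : Pt L 2 (n - 1)) :
    |Psinext n hn1 ξn dbn Ψn lam R z| ≤ (L : ℝ)⁻¹ * (20 * B ^ 3) := by
  have hPξ : ∀ y, |Pop L 2 1 hn1 (fun y' => ξn y') y| ≤ 2 * B :=
    pop1_abs_le hL hn1 hξ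
  have m1 : ∀ y : Pt L 2 n, |ξn y * R y| ≤ B * (16 * B ^ 2) :=
    fun y => by rw [abs_mul]; exact mul_le_mul (hξ y) (hR y) (abs_nonneg _) hB.le
  have m2 : ∀ y : Pt L 2 n, |dbn y * Pop L 2 1 hn1 (fun y' => ξn y') y| ≤ B ^ 2 * (2 * B) :=
    fun y => by rw [abs_mul]; exact mul_le_mul (hdb y) (hPξ y) (abs_nonneg _) (by positivity)
  have m3 : ∀ y : Pt L 2 n, |dbn y * R y| ≤ B ^ 2 * (16 * B ^ 2) :=
    fun y => by rw [abs_mul]; exact mul_le_mul (hdb y) (hR y) (abs_nonneg _) (by positivity)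
  have m4 : ∀ y : Pt L 2 n, |Ψn y * Pop L 2 1 hn1 (fun y' => ξn y') y| ≤ B ^ 3 * (2 * B) :=
    fun y => by rw [abs_mul]; exact mul_le_mul (hΨ y) (hPξ y) (abs_nonneg _) (by positivity)
  have m5 : ∀ y : Pt L 2 n, |Ψn y * R y| ≤ B ^ 3 * (16 * B ^ 2) :=
    fun y => by rw [abs_mul]; exact mul_le_mul (hΨ y) (hR y) (abs_nonneg _) (by positivity)
  have T1 := scaleq_abs_le hL hn1 hΨ z
  have T2 := scaleq_abs_le hL hn1 m1 z
  have T3 := scaleq_abs_le hL hn1 m2 z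
  have hlam2 : (0:ℝ) ≤ lam ^ 2 := by positivity
  have T4 : |lam * scale L 2 hn1 (Qop L 2 1 hn1 (fun y => dbn y * R y)) z|
      ≤ lam * (B ^ 2 * (16 * B ^ 2)) := by
    rw [abs_mul, abs_of_nonneg hlam]
    exact mul_le_mul_of_nonneg_left (scaleq_abs_le hL hn1 m3 z) hlam
  have T5 : |lam * scale L 2 hn1 (Qop L 2 1 hn1
      (fun y => Ψn y * Pop L 2 1 hn1 (fun y' => ξn y') y)) z|
      ≤ lam * (B ^ 3 * (2 * B)) := by
    rw [abs_mul, abs_of_nonneg hlam]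
    exact mul_le_mul_of_nonneg_left (scaleq_abs_le hL hn1 m4 z) hlam
  have T6 : |lam ^ 2 * scale L 2 hn1 (Qop L 2 1 hn1 (fun y => Ψn y * R y)) z|
      ≤ lam ^ 2 * (B ^ 3 * (16 * B ^ 2)) := by
    rw [abs_mul, abs_of_nonneg hlam2]
    exact mul_le_mul_of_nonneg_left (scaleq_abs_le hL hn1 m5 z) hlam2
  have hu0 : (0:ℝ) ≤ lam * B := by positivity
  have hu2 : lam * B * (lam * B) ≤ 1 / 20 * (lam * B) :=
    mul_le_mul_of_nonneg_right ha hu0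
  have hB3 : (0:ℝ) ≤ B ^ 3 := by positivity
  have e1 : lam * (B ^ 2 * (16 * B ^ 2)) + lam * (B ^ 3 * (2 * B))
      + lam ^ 2 * (B ^ 3 * (16 * B ^ 2)) ≤ B ^ 3 := by
    have h : 16 * (lam * B) + 2 * (lam * B) + 16 * ((lam * B) * (lam * B)) ≤ 1 := by
      linarith
    have := mul_le_mul_of_nonneg_right h hB3
    linarith [this]
  have hsum : |scale L 2 hn1 (Qop L 2 1 hn1 Ψn) z
      + scale L 2 hn1 (Qop L 2 1 hn1 (fun y => ξn y * R y)) z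
      + scale L 2 hn1 (Qop L 2 1 hn1
          (fun y => dbn y * Pop L 2 1 hn1 (fun y' => ξn y') y)) z
      + lam * scale L 2 hn1 (Qop L 2 1 hn1 (fun y => dbn y * R y)) z
      + lam * scale L 2 hn1 (Qop L 2 1 hn1
          (fun y => Ψn y * Pop L 2 1 hn1 (fun y' => ξn y') y)) z
      + lam ^ 2 * scale L 2 hn1 (Qop L 2 1 hn1 (fun y => Ψn y * R y)) z|
      ≤ 20 * B ^ 3 := by
    rw [abs_le] at T1 T2 T3 T4 T5 T6 ⊢
    constructor <;>
      linarith [T1.1, T1.2, T2.1, T2.2, T3.1, T3.2, T4.1, T4.2, T5.1, T5.2,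
        T6.1, T6.2, e1]
  show |(L : ℝ)⁻¹ * _| ≤ _
  rw [abs_mul, abs_of_nonneg (by positivity : (0:ℝ) ≤ ((L:ℝ))⁻¹)]
  exact mul_le_mul_of_nonneg_left hsum (by positivity)

end Level
open scoped Classical

/-- A solution of the implicit `R`-equation, if one exists. -/
noncomputable def solveR (n : ℕ) (hn1 : 1 ≤ n) (ξn dbn Ψn : Pt L 2 n → ℝ)
    (lam mu : ℝ) : Pt L 2 n → ℝ :=
  if h : ∃ R : Pt L 2 n → ℝ, R = Phimap n hn1 ξn dbn Ψn lam mu R then h.choose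
  else 0

lemma solveR_spec {n : ℕ} (hn1 : 1 ≤ n) {ξn dbn Ψn : Pt L 2 n → ℝ}
    {lam mu : ℝ} (h : ∃ R : Pt L 2 n → ℝ, R = Phimap n hn1 ξn dbn Ψn lam mu R) :
    solveR n hn1 ξn dbn Ψn lam mu
      = Phimap n hn1 ξn dbn Ψn lam mu (solveR n hn1 ξn dbn Ψn lam mu) := by
  simp only [solveR, dif_pos h]
  exact h.choose_spec

/-- The recursively constructed remainder field `Ψ^{(N)}`. -/
noncomputable def PsiF (N : ℕ) (ξ dbf : ∀ n : ℕ, Pt L 2 n → ℝ)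
    (lam mu : ℕ → ℝ) (n : ℕ) : Pt L 2 n → ℝ :=
  if h : n < N then
    Psinext (n + 1) (Nat.le_add_left 1 n) (ξ (n + 1)) (dbf (n + 1))
      (PsiF N ξ dbf lam mu (n + 1)) (lam (n + 1))
      (solveR (n + 1) (Nat.le_add_left 1 n) (ξ (n + 1)) (dbf (n + 1))
        (PsiF N ξ dbf lam mu (n + 1)) (lam (n + 1)) (mu (n + 1)))
  else 0
termination_by N - n
decreasing_by omega

/-- The recursively constructed remainder field `R^{(N)}`. -/
noncomputable def RF (N : ℕ) (ξ dbf : ∀ n : ℕ, Pt L 2 n → ℝ)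
    (lam mu : ℕ → ℝ) (n : ℕ) : Pt L 2 n → ℝ :=
  if h : 1 ≤ n then
    solveR n h (ξ n) (dbf n) (PsiF N ξ dbf lam mu n) (lam n) (mu n)
  else 0

lemma RF_pos {N : ℕ} {ξ dbf : ∀ n : ℕ, Pt L 2 n → ℝ} {lam mu : ℕ → ℝ}
    {n : ℕ} (hn1 : 1 ≤ n) :
    RF N ξ dbf lam mu n
      = solveR n hn1 (ξ n) (dbf n) (PsiF N ξ dbf lam mu n) (lam n) (mu n) := by
  rw [RF, dif_pos hn1]

lemma PsiF_of_lt {N : ℕ} {ξ dbf : ∀ n : ℕ, Pt L 2 n → ℝ} {lam mu : ℕ → ℝ}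
    {n : ℕ} (h : n < N) :
    PsiF N ξ dbf lam mu n
      = Psinext (n + 1) (Nat.le_add_left 1 n) (ξ (n + 1)) (dbf (n + 1))
          (PsiF N ξ dbf lam mu (n + 1)) (lam (n + 1))
          (RF N ξ dbf lam mu (n + 1)) := by
  rw [PsiF, dif_pos h, RF_pos (Nat.le_add_left 1 n)]

lemma PsiF_of_ge {N : ℕ} {ξ dbf : ∀ n : ℕ, Pt L 2 n → ℝ} {lam mu : ℕ → ℝ}
    {n : ℕ} (h : ¬ n < N) : PsiF N ξ dbf lam mu n = 0 := by
  rw [PsiF, dif_neg h]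

section Master

variable {N : ℕ} {ξ dbf : ∀ n : ℕ, Pt L 2 n → ℝ} {lam mu Bf : ℕ → ℝ}

/-- The abstract recursion. -/
def Rec (N : ℕ) (ξ dbf : ∀ n : ℕ, Pt L 2 n → ℝ) (lam mu : ℕ → ℝ)
    (Ψ R : ∀ n : ℕ, Pt L 2 n → ℝ) : Prop :=
  Ψ N = 0 ∧ ∀ (n : ℕ) (hn1 : 1 ≤ n), n ≤ N →
    (R n = Phimap n hn1 (ξ n) (dbf n) (Ψ n) (lam n) (mu n) (R n)) ∧
    (Ψ (n - 1) = Psinext n hn1 (ξ n) (dbf n) (Ψ n) (lam n) (R n))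

variable (hL : 0 < L)
  (hB : ∀ n, 0 < Bf n) (hlam : ∀ n, 0 ≤ lam n)
  (hξ : ∀ n, n ≤ N → ∀ x, |ξ n x| ≤ Bf n)
  (hdb : ∀ n, n ≤ N → ∀ x, |dbf n x| ≤ Bf n ^ 2)
  (ha : ∀ n, 1 ≤ n → lam n * Bf n ≤ 1 / 20)
  (hmu : ∀ n, 1 ≤ n → |mu n| ≤ 1 / 10)
  (hml : ∀ n, 1 ≤ n → |mu n * (lam n)⁻¹| ≤ Bf n / 2)
  (hstep : ∀ n, 1 ≤ n → (L : ℝ)⁻¹ * (20 * Bf n ^ 3) ≤ Bf (n - 1) ^ 3)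

include hL hB hlam hξ hdb ha hmu hml hstep

lemma master_bound {Ψ R : ∀ n : ℕ, Pt L 2 n → ℝ}
    (hrec : Rec N ξ dbf lam mu Ψ R) :
    ∀ n, n ≤ N → ∀ x, |Ψ n x| ≤ Bf n ^ 3 := by
  suffices H : ∀ k n, n ≤ N → N - n ≤ k → ∀ x, |Ψ n x| ≤ Bf n ^ 3 by
    exact fun n hn => H (N - n) n hn le_rfl
  intro k
  induction k with
  | zero =>
    intro n hn hk x
    have hnN : n = N := by omega
    subst hnN
    rw [hrec.1]
    simpa using (pow_nonneg (hB n).le 3)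
  | succ k ih =>
    intro n hn hk
    by_cases hnN : N ≤ n
    · have hEq : n = N := le_antisymm hn hnN
      subst hEq
      intro x
      rw [hrec.1]
      simpa using (pow_nonneg (hB n).le 3)
    · push_neg at hnN
      have h1 : n + 1 ≤ N := hnN
      have hΨ1 := ih (n + 1) h1 (by omega)
      obtain ⟨hfixR, hpsi⟩ := hrec.2 (n + 1) (Nat.le_add_left 1 n) h1
      have hRb := phimap_fixed_bound (Nat.le_add_left 1 n) hL (hB (n+1))
        (hlam (n+1)) (hξ (n+1) h1) (hdb (n+1) h1) hΨ1
        (ha (n+1) (Nat.le_add_left 1 n)) (hmu (n+1) (Nat.le_add_left 1 n))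
        (hml (n+1) (Nat.le_add_left 1 n)) hfixR
      intro x
      have hpsi' : Ψ n = Psinext (n+1) (Nat.le_add_left 1 n) (ξ (n+1))
          (dbf (n+1)) (Ψ (n+1)) (lam (n+1)) (R (n+1)) := hpsi
      rw [hpsi']
      exact le_trans
        (psinext_abs_le (Nat.le_add_left 1 n) hL (hB (n+1)) (hlam (n+1))
          (hξ (n+1) h1) (hdb (n+1) h1) hΨ1 (ha (n+1) (Nat.le_add_left 1 n)) hRb x)
        (hstep (n+1) (Nat.le_add_left 1 n))

lemma master_unique {Ψ R Ψ' R' : ∀ n : ℕ, Pt L 2 n → ℝ}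
    (h : Rec N ξ dbf lam mu Ψ R) (h' : Rec N ξ dbf lam mu Ψ' R') :
    (∀ n, n ≤ N → Ψ n = Ψ' n) ∧ (∀ n, 1 ≤ n → n ≤ N → R n = R' n) := by
  have hΨb := master_bound hL hB hlam hξ hdb ha hmu hml hstep h
  have keyR : ∀ n (hn1 : 1 ≤ n), n ≤ N → Ψ n = Ψ' n → R n = R' n := by
    intro n hn1 hnN he
    have h1 := (h.2 n hn1 hnN).1
    have h2 := (h'.2 n hn1 hnN).1
    rw [← he] at h2
    exact phimap_fixed_unique hn1 hL (hB n) (hlam n) (hξ n hnN) (hdb n hnN)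
      (hΨb n hnN) (ha n hn1) (hmu n hn1) h1 h2
  have keyΨ : ∀ n, n ≤ N → Ψ n = Ψ' n := by
    suffices H : ∀ k n, n ≤ N → N - n ≤ k → Ψ n = Ψ' n by
      exact fun n hn => H (N - n) n hn le_rfl
    intro k
    induction k with
    | zero =>
      intro n hn hk
      have hnN : n = N := by omega
      subst hnN
      rw [h.1, h'.1]
    | succ k ih =>
      intro n hn hk
      rcases Nat.lt_or_ge n N with hlt | hge
      · have h1 : n + 1 ≤ N := hlt
        have he := ih (n+1) h1 (by omega)
        have hR := keyR (n+1) (Nat.le_add_left 1 n) h1 he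
        have e1 : Ψ n = Psinext (n+1) (Nat.le_add_left 1 n) (ξ (n+1)) (dbf (n+1))
            (Ψ (n+1)) (lam (n+1)) (R (n+1)) :=
          (h.2 (n+1) (Nat.le_add_left 1 n) h1).2
        have e2 : Ψ' n = Psinext (n+1) (Nat.le_add_left 1 n) (ξ (n+1)) (dbf (n+1))
            (Ψ' (n+1)) (lam (n+1)) (R' (n+1)) :=
          (h'.2 (n+1) (Nat.le_add_left 1 n) h1).2
        rw [e1, e2, he, hR]
      · have hnN : n = N := by omega
        subst hnN
        rw [h.1, h'.1]
  exact ⟨keyΨ, fun n hn1 hnN => keyR n hn1 hnN (keyΨ n hnN)⟩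

lemma psiF_bound :
    ∀ n, n ≤ N → ∀ x, |PsiF N ξ dbf lam mu n x| ≤ Bf n ^ 3 := by
  suffices H : ∀ k n, n ≤ N → N - n ≤ k → ∀ x, |PsiF N ξ dbf lam mu n x| ≤ Bf n ^ 3 by
    exact fun n hn => H (N - n) n hn le_rfl
  intro k
  induction k with
  | zero =>
    intro n hn hk x
    have hnN : n = N := by omega
    subst hnN
    rw [PsiF_of_ge (lt_irrefl n)]
    simpa using (pow_nonneg (hB n).le 3)
  | succ k ih =>
    intro n hn hk
    by_cases hnN : N ≤ n
    · have hEq : n = N := le_antisymm hn hnN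
      subst hEq
      intro x
      rw [PsiF_of_ge (lt_irrefl n)]
      simpa using (pow_nonneg (hB n).le 3)
    · push_neg at hnN
      have h1 : n + 1 ≤ N := hnN
      have hΨ1 := ih (n + 1) h1 (by omega)
      have hEx := phimap_fixed_exists (Nat.le_add_left 1 n) hL (hB (n+1))
        (hlam (n+1)) (hξ (n+1) h1) (hdb (n+1) h1) hΨ1
        (ha (n+1) (Nat.le_add_left 1 n)) (hmu (n+1) (Nat.le_add_left 1 n))
      have hfix : RF N ξ dbf lam mu (n+1)
          = Phimap (n+1) (Nat.le_add_left 1 n) (ξ (n+1)) (dbf (n+1))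
              (PsiF N ξ dbf lam mu (n+1)) (lam (n+1)) (mu (n+1))
              (RF N ξ dbf lam mu (n+1)) := by
        rw [RF_pos (Nat.le_add_left 1 n)]
        exact solveR_spec (Nat.le_add_left 1 n) hEx
      have hRb := phimap_fixed_bound (Nat.le_add_left 1 n) hL (hB (n+1))
        (hlam (n+1)) (hξ (n+1) h1) (hdb (n+1) h1) hΨ1
        (ha (n+1) (Nat.le_add_left 1 n)) (hmu (n+1) (Nat.le_add_left 1 n))
        (hml (n+1) (Nat.le_add_left 1 n)) hfix
      intro x
      rw [PsiF_of_lt hnN]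
      exact le_trans
        (psinext_abs_le (Nat.le_add_left 1 n) hL (hB (n+1)) (hlam (n+1))
          (hξ (n+1) h1) (hdb (n+1) h1) hΨ1 (ha (n+1) (Nat.le_add_left 1 n)) hRb x)
        (hstep (n+1) (Nat.le_add_left 1 n))

lemma master_exists :
    Rec N ξ dbf lam mu (PsiF N ξ dbf lam mu) (RF N ξ dbf lam mu) := by
  constructor
  · exact PsiF_of_ge (lt_irrefl N)
  · intro n hn1 hnN
    have hEx := phimap_fixed_exists hn1 hL (hB n) (hlam n) (hξ n hnN) (hdb n hnN)
      (psiF_bound hL hB hlam hξ hdb ha hmu hml hstep n hnN) (ha n hn1) (hmu n hn1)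
    constructor
    · rw [RF_pos hn1]
      exact solveR_spec hn1 hEx
    · obtain ⟨m, rfl⟩ : ∃ m, n = m + 1 := ⟨n - 1, by omega⟩
      show PsiF N ξ dbf lam mu m = _
      rw [PsiF_of_lt (show m < N by omega)]

end Master

/-- Square root comparison helper. -/
lemma le_rpow_half {Lr c : ℝ} (hc : 0 < c) (hcL : c ^ 2 ≤ Lr) :
    c ≤ Lr ^ ((1:ℝ)/2) := by
  have h := Real.rpow_le_rpow (by positivity) hcL (by norm_num : (0:ℝ) ≤ 1/2)
  calc c = (c ^ 2) ^ ((1:ℝ)/2) := by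
        rw [← Real.rpow_natCast c 2, ← Real.rpow_mul hc.le]; norm_num
    _ ≤ Lr ^ ((1:ℝ)/2) := h

lemma rpow_neg_half_le {Lr c : ℝ} (hc : 0 < c) (hcL : c ^ 2 ≤ Lr) :
    Lr ^ (-((1:ℝ)/2)) ≤ c⁻¹ := by
  have hL0 : (0:ℝ) < Lr := lt_of_lt_of_le (by positivity) hcL
  rw [Real.rpow_neg hL0.le]
  exact inv_anti₀ hc (le_rpow_half hc hcL)

/-- Extraction of the pointwise bounds from the good event. -/
lemma good_bounds {Ωs : Type*} [MeasurableSpace Ωs] {P : Measure Ωs}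
    (W : WhiteNoise L 2 P) {κs g : ℝ} (hg : 0 < g) (hL : 0 < L) {ω : Ωs}
    (hω : ω ∈ goodEvent L 2 W κs g) (N n : ℕ) (hn : n ≤ N) :
    (∀ x, |W.ξ n x ω| ≤ (L:ℝ) ^ (κs * (n:ℝ)) * (2*g)⁻¹) ∧
    (∀ x, |db L 2 W N n ω x| ≤ ((L:ℝ) ^ (κs * (n:ℝ)) * (2*g)⁻¹) ^ 2) := by
  have hLr : (0:ℝ) < (L:ℝ) := by exact_mod_cast hL
  have h0 : ENNReal.ofReal (normBlock L 2 W κs N n ω)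
      ≤ ENNReal.ofReal (2*g)⁻¹ := by
    refine le_trans ?_ hω
    refine le_trans ?_
      (le_iSup (fun N' => ⨆ n' : Fin (N'+1),
        ENNReal.ofReal (normBlock L 2 W κs N' n' ω)) N)
    exact le_iSup (fun n' : Fin (N+1) =>
      ENNReal.ofReal (normBlock L 2 W κs N n' ω)) (⟨n, by omega⟩ : Fin (N+1))
  have h1 : normBlock L 2 W κs N n ω ≤ (2*g)⁻¹ :=
    (ENNReal.ofReal_le_ofReal_iff (by positivity)).mp h0
  rw [normBlock, Real.rpow_neg hLr.le] at h1
  have hpos : (0:ℝ) < (L:ℝ) ^ (κs * (n:ℝ)) := Real.rpow_pos_of_pos hLr _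
  have hmax : max (⨆ x : Pt L 2 n, |W.ξ n x ω|)
      (⨆ x : Pt L 2 n, |db L 2 W N n ω x| ^ ((1:ℝ)/2))
      ≤ (L:ℝ) ^ (κs * (n:ℝ)) * (2*g)⁻¹ := by
    rwa [inv_mul_le_iff₀ hpos] at h1
  have bdd1 : BddAbove (Set.range fun x : Pt L 2 n => |W.ξ n x ω|) :=
    Set.Finite.bddAbove (Set.finite_range _)
  have bdd2 : BddAbove (Set.range fun x : Pt L 2 n =>
      |db L 2 W N n ω x| ^ ((1:ℝ)/2)) := Set.Finite.bddAbove (Set.finite_range _)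
  constructor
  · intro x
    exact le_trans (le_ciSup bdd1 x) (le_trans (le_max_left _ _) hmax)
  · intro x
    have hs : |db L 2 W N n ω x| ^ ((1:ℝ)/2) ≤ (L:ℝ) ^ (κs * (n:ℝ)) * (2*g)⁻¹ :=
      le_trans (le_ciSup bdd2 x) (le_trans (le_max_right _ _) hmax)
    have h2 := pow_le_pow_left₀ (Real.rpow_nonneg (abs_nonneg _) _) hs 2
    calc |db L 2 W N n ω x| = (|db L 2 W N n ω x| ^ ((1:ℝ)/2)) ^ 2 := by
          rw [← Real.rpow_natCast (|db L 2 W N n ω x| ^ ((1:ℝ)/2)) 2,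
            ← Real.rpow_mul (abs_nonneg _)]
          norm_num
      _ ≤ _ := h2

set_option maxHeartbeats 1000000 in
/-- `IsRemainder` is definitionally the abstract recursion. -/
lemma rec_iff {Ωs : Type*} [MeasurableSpace Ωs] {P : Measure Ωs}
    (W : WhiteNoise L 2 P) (ω : Ωs) (g r : ℝ) (N : ℕ)
    (Ψ R : ∀ n : ℕ, Pt L 2 n → ℝ) :
    IsRemainder L W ω g r N Ψ R ↔
      Rec N (fun n y => W.ξ n y ω) (fun n => db L 2 W N n ω)
        (fun n => lamC L g n) (fun n => muC L r g n) Ψ R :=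
  Iff.rfl

end Hier

set_option maxHeartbeats 2000000 in
open Hier in
theorem statement_15 (κs r : ℝ) (hκ : 0 < κs) (hκ' : κs ≤ 1 / 8) (hr : 1 ≤ r) :
    ∃ L₀ : ℕ, ∀ (L : ℕ) [NeZero L], Odd L → L₀ ≤ L →
      ∀ g : ℝ, 0 < g → g ≤ 1 →
      ∀ (Ω : Type) (_ : MeasurableSpace Ω) (P : Measure Ω),
        IsProbabilityMeasure P →
      ∀ (W : WhiteNoise L 2 P) (ω : Ω), ω ∈ goodEvent L 2 W κs g →
      ∀ N : ℕ,
        (∃ Ψ R : ∀ n : ℕ, Pt L 2 n → ℝ, IsRemainder L W ω g r N Ψ R) ∧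
        (∀ Ψ R Ψ' R' : ∀ n : ℕ, Pt L 2 n → ℝ,
          IsRemainder L W ω g r N Ψ R → IsRemainder L W ω g r N Ψ' R' →
          (∀ n : ℕ, n ≤ N → Ψ n = Ψ' n) ∧
          (∀ n : ℕ, 1 ≤ n → n ≤ N → R n = R' n)) ∧
        (∀ Ψ R : ∀ n : ℕ, Pt L 2 n → ℝ, IsRemainder L W ω g r N Ψ R →
          ∀ n : ℕ, n ≤ N → ∀ x : Pt L 2 n,
            (L : ℝ) ^ (-(κs * (n : ℝ))) * |Ψ n x| ^ ((1 : ℝ) / 3) ≤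
              (2 * g)⁻¹) := by
  refine ⟨1000000 + ⌈100 * r⌉₊, ?_⟩
  intro L _inst hodd hLL g hg hg1 Ω mΩ P hP W ω hω N
  have hr0 : (0:ℝ) ≤ r := by linarith
  have hL6 : 1000000 ≤ L := le_trans (Nat.le_add_right _ _) hLL
  have hL0 : 0 < L := by omega
  have hLr6 : (1000000:ℝ) ≤ (L:ℝ) := by exact_mod_cast hL6
  have hLrr : 100 * r ≤ (L:ℝ) := by
    refine le_trans (Nat.le_ceil _) ?_
    exact_mod_cast le_trans (Nat.le_add_left _ _) hLL
  have hLr1 : (1:ℝ) < (L:ℝ) := by linarith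
  have hLr0 : (0:ℝ) < (L:ℝ) := by linarith
  -- pointwise bounds from the good event
  have hgb := fun (n : ℕ) (hn : n ≤ N) => good_bounds W hg hL0 hω N n hn
  have hξb : ∀ n, n ≤ N → ∀ x, |W.ξ n x ω| ≤ (L:ℝ) ^ (κs * (n:ℝ)) * (2*g)⁻¹ :=
    fun n hn => (hgb n hn).1
  have hdbb : ∀ n, n ≤ N → ∀ x, |db L 2 W N n ω x|
      ≤ ((L:ℝ) ^ (κs * (n:ℝ)) * (2*g)⁻¹) ^ 2 := fun n hn => (hgb n hn).2
  -- numeric facts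
  have hBpos : ∀ n : ℕ, (0:ℝ) < (L:ℝ) ^ (κs * (n:ℝ)) * (2*g)⁻¹ := by
    intro n
    have := Real.rpow_pos_of_pos hLr0 (κs * (n:ℝ))
    positivity
  have hlam0 : ∀ n : ℕ, (0:ℝ) ≤ lamC L g n := by
    intro n; rw [lamC]; positivity
  have haS : ∀ n : ℕ, 1 ≤ n →
      lamC L g n * ((L:ℝ) ^ (κs * (n:ℝ)) * (2*g)⁻¹) ≤ 1/20 := by
    intro n hn1
    have hn' : (1:ℝ) ≤ (n:ℝ) := by exact_mod_cast hn1
    have e1 : κs * (n:ℝ) - (n:ℝ) ≤ -((1:ℝ)/2) := by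
      nlinarith [mul_le_mul_of_nonneg_right
        (by linarith : (1:ℝ)/2 ≤ 1 - κs) (by linarith : (0:ℝ) ≤ (n:ℝ))]
    have e2 : (L:ℝ) ^ (κs * (n:ℝ) - (n:ℝ)) ≤ (L:ℝ) ^ (-((1:ℝ)/2)) :=
      Real.rpow_le_rpow_of_exponent_le hLr1.le e1
    have e3 : (L:ℝ) ^ (-((1:ℝ)/2)) ≤ (10:ℝ)⁻¹ :=
      rpow_neg_half_le (by norm_num) (by nlinarith)
    have key : (L:ℝ) ^ (κs * (n:ℝ)) ≤ (L:ℝ) ^ ((n:ℝ)) * (1/10) := by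
      have hsplit : (L:ℝ) ^ (κs * (n:ℝ))
          = (L:ℝ) ^ ((n:ℝ)) * (L:ℝ) ^ (κs * (n:ℝ) - (n:ℝ)) := by
        rw [← Real.rpow_add hLr0]; ring_nf
      rw [hsplit]
      have : (L:ℝ) ^ (κs * (n:ℝ) - (n:ℝ)) ≤ 1/10 := by
        refine le_trans e2 ?_
        rw [show (1:ℝ)/10 = 10⁻¹ by norm_num]
        exact e3
      exact mul_le_mul_of_nonneg_left this (Real.rpow_nonneg hLr0.le _)
    have h1 : (L:ℝ) ^ (κs * (n:ℝ)) * (2*g)⁻¹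
        ≤ ((L:ℝ) ^ ((n:ℝ)) * (1/10)) * (2*g)⁻¹ :=
      mul_le_mul_of_nonneg_right key (by positivity)
    have h2 : lamC L g n * ((L:ℝ) ^ (κs * (n:ℝ)) * (2*g)⁻¹)
        ≤ lamC L g n * (((L:ℝ) ^ ((n:ℝ)) * (1/10)) * (2*g)⁻¹) :=
      mul_le_mul_of_nonneg_left h1 (hlam0 n)
    refine le_trans h2 (le_of_eq ?_)
    rw [lamC, Real.rpow_natCast]
    have hLn : ((L:ℝ)^n) ≠ 0 := by positivity
    field_simp
    ring
  -- |r - (1 - L⁻²) n g²| ≤ r + n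
  have habsX : ∀ n : ℕ, |r - (1 - ((L:ℝ)^2)⁻¹) * (n:ℝ) * g^2| ≤ r + (n:ℝ) := by
    intro n
    have hw1 : ((L:ℝ)^2)⁻¹ ≤ 1 := by
      rw [inv_le_one_iff₀]; right; nlinarith
    have hw0 : (0:ℝ) ≤ 1 - ((L:ℝ)^2)⁻¹ := by
      have : (0:ℝ) ≤ ((L:ℝ)^2)⁻¹ := by positivity
      linarith
    have hg2 : g^2 ≤ 1 := by nlinarith
    have hc0 : (0:ℝ) ≤ (1 - ((L:ℝ)^2)⁻¹) * (n:ℝ) * g^2 := by positivity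
    have hc1 : (1 - ((L:ℝ)^2)⁻¹) * (n:ℝ) * g^2 ≤ (n:ℝ) := by
      have s1 : (1 - ((L:ℝ)^2)⁻¹) * (n:ℝ) * g^2 ≤ 1 * (n:ℝ) * g^2 := by
        have h := mul_nonneg (mul_nonneg
          (by positivity : (0:ℝ) ≤ ((L:ℝ)^2)⁻¹)
          (Nat.cast_nonneg (α := ℝ) n)) (sq_nonneg g)
        linarith [h]
      have s2 : (1:ℝ) * (n:ℝ) * g^2 ≤ (n:ℝ) * 1 := by
        have := Nat.cast_nonneg (α := ℝ) n
        nlinarith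
      linarith
    rw [abs_le]; constructor <;> linarith
  have h2pow : ∀ n : ℕ, (n:ℝ) ≤ 2^n := fun n => by
    exact_mod_cast (Nat.lt_two_pow_self (n := n)).le
  have h1pow : ∀ n : ℕ, (1:ℝ) ≤ 2^n := fun n => by
    exact_mod_cast Nat.one_le_two_pow (n := n)
  have hrn : ∀ n : ℕ, r + (n:ℝ) ≤ (r+1) * 2^n := by
    intro n
    nlinarith [mul_le_mul_of_nonneg_left (h1pow n) hr0, h2pow n]
  have hmuS : ∀ n : ℕ, 1 ≤ n → |muC L r g n| ≤ 1/10 := by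
    intro n hn1
    have hL2n : (0:ℝ) < (L:ℝ)^(2*n) := by positivity
    have habs : |muC L r g n| ≤ ((L:ℝ)^(2*n))⁻¹ * (r + (n:ℝ)) := by
      rw [muC, abs_mul, abs_of_nonneg (by positivity : (0:ℝ) ≤ ((L:ℝ)^(2*n))⁻¹)]
      exact mul_le_mul_of_nonneg_left (habsX n) (by positivity)
    refine le_trans habs ?_
    have hLn2 : (L:ℝ)^(2*n) = ((L:ℝ)^2)^n := pow_mul _ 2 n
    have h11 : (2:ℝ)/(L:ℝ)^2 ≤ 1 := by
      rw [div_le_one (by positivity)]; nlinarith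
    have hp : ((2:ℝ)/(L:ℝ)^2)^n ≤ (2:ℝ)/(L:ℝ)^2 := by
      calc ((2:ℝ)/(L:ℝ)^2)^n ≤ ((2:ℝ)/(L:ℝ)^2)^1 :=
            pow_le_pow_of_le_one (by positivity) h11 hn1
        _ = _ := pow_one _
    have hps : (2:ℝ)^n / ((L:ℝ)^2)^n ≤ 2/(L:ℝ)^2 := by
      rw [← div_pow]; exact hp
    have hL2 : 20*(r+1) ≤ (L:ℝ)^2 := by nlinarith
    calc ((L:ℝ)^(2*n))⁻¹ * (r + (n:ℝ))
        ≤ ((L:ℝ)^(2*n))⁻¹ * ((r+1) * 2^n) :=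
          mul_le_mul_of_nonneg_left (hrn n) (by positivity)
      _ = (r+1) * ((2:ℝ)^n / ((L:ℝ)^2)^n) := by rw [hLn2]; ring
      _ ≤ (r+1) * (2/(L:ℝ)^2) := mul_le_mul_of_nonneg_left hps (by linarith)
      _ ≤ 1/10 := by
          rw [show (r+1) * (2/(L:ℝ)^2) = 2*(r+1)/(L:ℝ)^2 by ring,
            div_le_iff₀ (by positivity)]
          nlinarith
  have hmlS : ∀ n : ℕ, 1 ≤ n →
      |muC L r g n * (lamC L g n)⁻¹|
        ≤ ((L:ℝ) ^ (κs * (n:ℝ)) * (2*g)⁻¹) / 2 := by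
    intro n hn1
    have hLn : (0:ℝ) < (L:ℝ)^n := by positivity
    have hlcinv : (lamC L g n)⁻¹ = (L:ℝ)^n * g⁻¹ := by
      rw [lamC, mul_inv, inv_inv]
    have habs : |muC L r g n * (lamC L g n)⁻¹|
        ≤ ((L:ℝ)^(2*n))⁻¹ * (r + (n:ℝ)) * ((L:ℝ)^n * g⁻¹) := by
      rw [abs_mul, hlcinv, abs_of_nonneg (by positivity : (0:ℝ) ≤ (L:ℝ)^n * g⁻¹)]
      refine mul_le_mul_of_nonneg_right ?_ (by positivity)
      rw [muC, abs_mul, abs_of_nonneg (by positivity : (0:ℝ) ≤ ((L:ℝ)^(2*n))⁻¹)]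
      exact mul_le_mul_of_nonneg_left (habsX n) (by positivity)
    refine le_trans habs ?_
    have hsq : (L:ℝ)^(2*n) = (L:ℝ)^n * (L:ℝ)^n := by rw [two_mul, pow_add]
    have e0 : ((L:ℝ)^(2*n))⁻¹ * (r + (n:ℝ)) * ((L:ℝ)^n * g⁻¹)
        = (r + (n:ℝ)) * ((L:ℝ)^n)⁻¹ * g⁻¹ := by
      rw [hsq]; field_simp
    rw [e0]
    have h2L : (2:ℝ)/(L:ℝ) ≤ 1 := by
      rw [div_le_one hLr0]; linarith
    have hp : ((2:ℝ)/(L:ℝ))^n ≤ (2:ℝ)/(L:ℝ) := by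
      calc ((2:ℝ)/(L:ℝ))^n ≤ ((2:ℝ)/(L:ℝ))^1 :=
            pow_le_pow_of_le_one (by positivity) h2L hn1
        _ = _ := pow_one _
    have e1 : (r + (n:ℝ)) * ((L:ℝ)^n)⁻¹ * g⁻¹
        ≤ ((r+1) * (2/(L:ℝ))) * g⁻¹ := by
      refine mul_le_mul_of_nonneg_right ?_ (by positivity)
      calc (r + (n:ℝ)) * ((L:ℝ)^n)⁻¹ ≤ ((r+1) * 2^n) * ((L:ℝ)^n)⁻¹ :=
            mul_le_mul_of_nonneg_right (hrn n) (by positivity)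
        _ = (r+1) * ((2:ℝ)^n/(L:ℝ)^n) := by ring
        _ = (r+1) * ((2/(L:ℝ))^n) := by rw [div_pow]
        _ ≤ (r+1) * (2/(L:ℝ)) := mul_le_mul_of_nonneg_left hp (by linarith)
    refine le_trans e1 ?_
    have e2 : ((r+1) * (2/(L:ℝ))) * g⁻¹ ≤ (1/4) * g⁻¹ := by
      refine mul_le_mul_of_nonneg_right ?_ (by positivity)
      rw [show (r+1) * (2/(L:ℝ)) = 2*(r+1)/(L:ℝ) by ring, div_le_iff₀ hLr0]
      nlinarith
    refine le_trans e2 ?_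
    have e3 : (1:ℝ) ≤ (L:ℝ) ^ (κs * (n:ℝ)) := by
      have := Real.rpow_le_rpow_of_exponent_le hLr1.le
        (by positivity : (0:ℝ) ≤ κs * (n:ℝ))
      rwa [Real.rpow_zero] at this
    have e4 : (1:ℝ)/4 * g⁻¹ = 1 * ((2*g)⁻¹/2) := by
      rw [mul_inv]; ring
    rw [e4, show ((L:ℝ) ^ (κs * (n:ℝ)) * (2*g)⁻¹) / 2
        = (L:ℝ) ^ (κs * (n:ℝ)) * ((2*g)⁻¹/2) by ring]
    exact mul_le_mul_of_nonneg_right e3 (by positivity)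
  have hcube : ∀ m : ℕ, ((L:ℝ) ^ (κs * (m:ℝ)) * (2*g)⁻¹) ^ 3
      = (L:ℝ) ^ (κs * (m:ℝ) * 3) * ((2*g)⁻¹)^3 := by
    intro m
    rw [mul_pow]
    congr 1
    rw [← Real.rpow_natCast ((L:ℝ) ^ (κs * (m:ℝ))) 3, ← Real.rpow_mul hLr0.le]
    norm_num
  have hstepS : ∀ n : ℕ, 1 ≤ n →
      (L:ℝ)⁻¹ * (20 * ((L:ℝ) ^ (κs * (n:ℝ)) * (2*g)⁻¹) ^ 3)
        ≤ ((L:ℝ) ^ (κs * ((n-1 : ℕ):ℝ)) * (2*g)⁻¹) ^ 3 := by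
    intro n hn1
    have h20 : (20:ℝ) ≤ (L:ℝ) ^ (1 - 3*κs) := by
      have h1 : (L:ℝ) ^ ((1:ℝ)/2) ≤ (L:ℝ) ^ (1 - 3*κs) :=
        Real.rpow_le_rpow_of_exponent_le hLr1.le (by linarith)
      have h2 : (20:ℝ) ≤ (L:ℝ) ^ ((1:ℝ)/2) := le_rpow_half (by norm_num) (by nlinarith)
      linarith
    have hmain : (L:ℝ)⁻¹ * (20 * (L:ℝ) ^ (κs * (n:ℝ) * 3))
        ≤ (L:ℝ) ^ (κs * ((n:ℝ)-1) * 3) := by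
      have hsplit : (L:ℝ) ^ (κs * ((n:ℝ)-1) * 3)
          = (L:ℝ) ^ (κs * (n:ℝ) * 3 - 1) * (L:ℝ) ^ (1 - 3*κs) := by
        rw [← Real.rpow_add hLr0]; ring_nf
      have hpos2 : (0:ℝ) < (L:ℝ) ^ (κs * (n:ℝ) * 3 - 1) :=
        Real.rpow_pos_of_pos hLr0 _
      have hLinv : (L:ℝ)⁻¹ * (L:ℝ) ^ (κs * (n:ℝ) * 3)
          = (L:ℝ) ^ (κs * (n:ℝ) * 3 - 1) := by
        rw [Real.rpow_sub hLr0, Real.rpow_one]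
        rw [div_eq_mul_inv]; ring
      calc (L:ℝ)⁻¹ * (20 * (L:ℝ) ^ (κs * (n:ℝ) * 3))
          = 20 * ((L:ℝ)⁻¹ * (L:ℝ) ^ (κs * (n:ℝ) * 3)) := by ring
        _ = 20 * (L:ℝ) ^ (κs * (n:ℝ) * 3 - 1) := by rw [hLinv]
        _ ≤ (L:ℝ) ^ (1 - 3*κs) * (L:ℝ) ^ (κs * (n:ℝ) * 3 - 1) :=
            mul_le_mul_of_nonneg_right h20 hpos2.le
        _ = (L:ℝ) ^ (κs * ((n:ℝ)-1) * 3) := by rw [hsplit]; ring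
    have hcast : ((n-1 : ℕ):ℝ) = (n:ℝ) - 1 := by
      rw [Nat.cast_sub hn1, Nat.cast_one]
    calc (L:ℝ)⁻¹ * (20 * ((L:ℝ) ^ (κs * (n:ℝ)) * (2*g)⁻¹) ^ 3)
        = ((L:ℝ)⁻¹ * (20 * (L:ℝ) ^ (κs * (n:ℝ) * 3))) * ((2*g)⁻¹)^3 := by
          rw [hcube n]; ring
      _ ≤ (L:ℝ) ^ (κs * ((n:ℝ)-1) * 3) * ((2*g)⁻¹)^3 :=
          mul_le_mul_of_nonneg_right hmain (by positivity)
      _ = ((L:ℝ) ^ (κs * ((n-1 : ℕ):ℝ)) * (2*g)⁻¹) ^ 3 := by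
          rw [hcube (n-1), hcast]
  -- assemble
  refine ⟨?_, ?_, ?_⟩
  · exact ⟨PsiF N (fun n y => W.ξ n y ω) (fun n => db L 2 W N n ω)
        (fun n => lamC L g n) (fun n => muC L r g n),
      RF N (fun n y => W.ξ n y ω) (fun n => db L 2 W N n ω)
        (fun n => lamC L g n) (fun n => muC L r g n),
      (rec_iff W ω g r N _ _).mpr
        (master_exists (Bf := fun n => (L:ℝ) ^ (κs * (n:ℝ)) * (2*g)⁻¹)
          hL0 hBpos hlam0 hξb hdbb haS hmuS hmlS hstepS)⟩
  · intro Ψ R Ψ' R' h h'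
    have hrec := (rec_iff W ω g r N Ψ R).mp h
    have hrec' := (rec_iff W ω g r N Ψ' R').mp h'
    exact master_unique (Bf := fun n => (L:ℝ) ^ (κs * (n:ℝ)) * (2*g)⁻¹)
      hL0 hBpos hlam0 hξb hdbb haS hmuS hmlS hstepS hrec hrec'
  · intro Ψ R h n hn x
    have hrec := (rec_iff W ω g r N Ψ R).mp h
    have hb : |Ψ n x| ≤ ((L:ℝ) ^ (κs * (n:ℝ)) * (2*g)⁻¹) ^ 3 :=
      master_bound (Bf := fun n => (L:ℝ) ^ (κs * (n:ℝ)) * (2*g)⁻¹)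
        hL0 hBpos hlam0 hξb hdbb haS hmuS hmlS hstepS hrec n hn x
    have h13 : |Ψ n x| ^ ((1:ℝ)/3) ≤ (L:ℝ) ^ (κs * (n:ℝ)) * (2*g)⁻¹ := by
      have h1 := Real.rpow_le_rpow (abs_nonneg _) hb (by norm_num : (0:ℝ) ≤ 1/3)
      have h2 : ((((L:ℝ) ^ (κs * (n:ℝ)) * (2*g)⁻¹) ^ 3 : ℝ)) ^ ((1:ℝ)/3)
          = (L:ℝ) ^ (κs * (n:ℝ)) * (2*g)⁻¹ := by
        rw [← Real.rpow_natCast ((L:ℝ) ^ (κs * (n:ℝ)) * (2*g)⁻¹) 3,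
          ← Real.rpow_mul (by positivity)]
        norm_num
      rwa [h2] at h1
    calc (L:ℝ) ^ (-(κs * (n:ℝ))) * |Ψ n x| ^ ((1:ℝ)/3)
        ≤ (L:ℝ) ^ (-(κs * (n:ℝ))) * ((L:ℝ) ^ (κs * (n:ℝ)) * (2*g)⁻¹) :=
          mul_le_mul_of_nonneg_left h13 (Real.rpow_nonneg hLr0.le _)
      _ = (2*g)⁻¹ := by
          rw [Real.rpow_neg hLr0.le,
            inv_mul_cancel_left₀ (ne_of_gt (Real.rpow_pos_of_pos hLr0 _))]
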